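/- If m, n > 1 have the same radical (rad(m) = rad(n)), then ∏_{d ∣ n} d^{μ(n/d)} = ∏_{d ∣ m} d^{μ(m/d)} (as positive rationals). -/

import Mathlib

def rad (n : ℕ) : ℕ := ∏ p ∈ n.primeFactors, p

open ArithmeticFunction Finset
open scoped ArithmeticFunction.Moebius

lemma primeFactors_eq_of_rad_eq {m n : ℕ} (h : rad m = rad n) :
    m.primeFactors = n.primeFactors := by
  have hm := Nat.primeFactors_prod (s := m.primeFactors) (fun p hp => Nat.prime_of_mem_primeFactors hp)
  have hn := Nat.primeFactors_prod (s := n.primeFactors) (fun p hp => Nat.prime_of_mem_primeFactors hp)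
  rw [← hm, ← hn]
  exact congrArg Nat.primeFactors h

lemma minFac_eq_of_primeFactors_eq {m n : ℕ} (hm : 1 < m) (hn : 1 < n)
    (h : m.primeFactors = n.primeFactors) : m.minFac = n.minFac := by
  have h1 : m.minFac ∈ n.primeFactors := by
    rw [← h]
    exact Nat.mem_primeFactors.mpr ⟨Nat.minFac_prime (by omega), Nat.minFac_dvd m, by omega⟩
  have h2 : n.minFac ∈ m.primeFactors := by
    rw [h]
    exact Nat.mem_primeFactors.mpr ⟨Nat.minFac_prime (by omega), Nat.minFac_dvd n, by omega⟩
  have l1 := Nat.minFac_le_of_dvd (Nat.minFac_prime (by omega : m ≠ 1)).two_le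
    (Nat.dvd_of_mem_primeFactors h1)
  have l2 := Nat.minFac_le_of_dvd (Nat.minFac_prime (by omega : n ≠ 1)).two_le
    (Nat.dvd_of_mem_primeFactors h2)
  omega

lemma vonMangoldt_eq_of_primeFactors_eq {m n : ℕ} (hm : 1 < m) (hn : 1 < n)
    (h : m.primeFactors = n.primeFactors) : Λ m = Λ n := by
  rw [vonMangoldt_apply, vonMangoldt_apply, minFac_eq_of_primeFactors_eq hm hn h]
  simp only [isPrimePow_iff_card_primeFactors_eq_one, h]

lemma log_prod_eq (n : ℕ) (hn : 0 < n) :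
    Real.log ((∏ d ∈ n.divisors, (d : ℚ) ^ (μ (n / d)) : ℚ) : ℝ) = Λ n := by
  push_cast
  rw [Real.log_prod]
  · have : ∀ d ∈ n.divisors, Real.log ((d : ℝ) ^ (μ (n / d) : ℤ))
        = Real.log d * (μ (n / d) : ℝ) := by
      intro d hd
      rw [Real.log_zpow, mul_comm]
    rw [Finset.sum_congr rfl this, ← log_mul_moebius_eq_vonMangoldt, mul_apply]
    rw [← Nat.sum_divisorsAntidiagonal (fun a b => Real.log a * (μ b : ℝ))]
    exact Finset.sum_congr rfl (fun x _ => by simp [log_apply])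
  · intro d hd
    have hd' : 0 < d := Nat.pos_of_mem_divisors hd
    positivity

lemma prod_pos (n : ℕ) (hn : 0 < n) :
    0 < ∏ d ∈ n.divisors, (d : ℚ) ^ (μ (n / d)) := by
  apply Finset.prod_pos
  intro d hd
  have hd' : 0 < d := Nat.pos_of_mem_divisors hd
  positivity

theorem mobius_prod_eq_of_rad_eq (m n : ℕ) (hm : 1 < m) (hn : 1 < n)
    (h : rad m = rad n) :
    ∏ d ∈ n.divisors, (d : ℚ) ^ (ArithmeticFunction.moebius (n / d)) =
      ∏ d ∈ m.divisors, (d : ℚ) ^ (ArithmeticFunction.moebius (m / d)) := by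
  have hpn := prod_pos n (by omega)
  have hpm := prod_pos m (by omega)
  have hlog : Real.log ((∏ d ∈ n.divisors, (d : ℚ) ^ (μ (n / d)) : ℚ) : ℝ)
      = Real.log ((∏ d ∈ m.divisors, (d : ℚ) ^ (μ (m / d)) : ℚ) : ℝ) := by
    rw [log_prod_eq n (by omega), log_prod_eq m (by omega),
      vonMangoldt_eq_of_primeFactors_eq hn hm (primeFactors_eq_of_rad_eq h.symm)]
  have := Real.log_injOn_pos (Set.mem_Ioi.mpr (by exact_mod_cast hpn))
    (Set.mem_Ioi.mpr (by exact_mod_cast hpm)) hlog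
  exact_mod_cast this
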